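/- arXiv:1812.06287 — 4 statements merged into one kernel-verified Lean document; each statement's English description precedes it below -/
import Mathlib

section
/- Let G be a finite simple graph on vertex set V with n = |V| ≥ 1. The following are equivalent: (a) there exist a bijection v : Fin n → V and, for each index i with 1 ≤ i ≤ n−1, a trail P_i in G from v(i) to v(i+1), such that the edge sets of P_1, …, P_{n−1} are pairwise disjoint; (b) G contains a trail whose support contains every vertex of V. -/
namespace PathEmbeddingAux

variable {V : Type*} {G : SimpleGraph V}

inductive TChain (G : SimpleGraph V) : V → List V → Type _
  | nil (a : V) : TChain G a []
  | cons {a b : V} {L : List V} (w : G.Walk a b) (c : TChain G b L) : TChain G a (b :: L)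

namespace TChain

def edgeLists : {a : V} → {L : List V} → TChain G a L → List (List (Sym2 V))
  | _, _, .nil _ => []
  | _, _, .cons w c => w.edges :: c.edgeLists

def edges {a : V} {L : List V} (c : TChain G a L) : List (Sym2 V) := c.edgeLists.flatten

lemma edges_nil (a : V) : (TChain.nil (G := G) a).edges = [] := rfl

lemma edges_cons {a b : V} {L : List V} (w : G.Walk a b) (c : TChain G b L) :
    (TChain.cons w c).edges = w.edges ++ c.edges := rfl

lemma length_edgeLists : ∀ {a : V} {L : List V} (c : TChain G a L),
    c.edgeLists.length = L.length
  | _, _, .nil _ => rfl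
  | _, _, .cons w c => by simp [edgeLists, length_edgeLists c]

def nthWalk : {a : V} → {L : List V} → (c : TChain G a L) → (i : ℕ) → (h : i < L.length) →
    G.Walk ((a :: L).get ⟨i, Nat.lt_succ_of_lt h⟩) (L.get ⟨i, h⟩)
  | _, _, .cons w _, 0, _ => w
  | _, _, .cons _ c, i+1, h => c.nthWalk i (by simpa using h)

lemma nthWalk_edges : ∀ {a : V} {L : List V} (c : TChain G a L) (i : ℕ) (h : i < L.length),
    (c.nthWalk i h).edges = c.edgeLists.get ⟨i, by rw [length_edgeLists]; exact h⟩
  | _, _, .cons w c, 0, _ => rfl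
  | _, _, .cons w c, i+1, h => nthWalk_edges c i (by simpa using h)

lemma chain_erase {x : V} {b : V} {L : List V} (c : TChain G b L) (hx : x ∈ L)
    (hnd : L.Nodup) :
    ∃ (L' : List V) (c' : TChain G b L'), c'.edges.Sublist c.edges ∧ L'.Nodup ∧
      (∀ y, y ∈ L' ↔ y ∈ L ∧ y ≠ x) := by
  induction c with
  | nil => simp at hx
  | @cons a v M w c ih =>
    by_cases hxv : x = v
    · subst hxv
      have hxM : x ∉ M := (List.nodup_cons.mp hnd).1
      cases c with
      | nil =>
        refine ⟨[], .nil a, List.nil_sublist _, List.nodup_nil, ?_⟩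
        intro y; simp
      | @cons _ u M₂ w₂ c₃ =>
        refine ⟨u :: M₂, .cons (w.append w₂) c₃, ?_, (List.nodup_cons.mp hnd).2, ?_⟩
        · simp only [edges_cons, SimpleGraph.Walk.edges_append, List.append_assoc]
          exact List.Sublist.refl _
        · intro y
          constructor
          · intro hy; exact ⟨List.mem_cons_of_mem _ hy, fun h => hxM (h ▸ hy)⟩
          · rintro ⟨hy, hyx⟩
            rcases List.mem_cons.mp hy with rfl | hy
            · exact absurd rfl hyx
            · exact hy
    · have hxM : x ∈ M := by
        rcases List.mem_cons.mp hx with rfl | h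
        · exact absurd rfl hxv
        · exact h
      obtain ⟨L₂, c₃, hsl, hnd₂, hmem⟩ := ih hxM (List.nodup_cons.mp hnd).2
      refine ⟨v :: L₂, .cons w c₃, ?_, ?_, ?_⟩
      · simp only [edges_cons]
        exact hsl.append_left _
      · refine List.nodup_cons.mpr ⟨fun hv => ?_, hnd₂⟩
        exact (List.nodup_cons.mp hnd).1 ((hmem v).mp hv).1
      · intro y
        constructor
        · intro hy
          rcases List.mem_cons.mp hy with rfl | hy
          · exact ⟨List.mem_cons_self, Ne.symm hxv⟩
          · obtain ⟨h1, h2⟩ := (hmem y).mp hy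
            exact ⟨List.mem_cons_of_mem _ h1, h2⟩
        · rintro ⟨hy, hyx⟩
          rcases List.mem_cons.mp hy with rfl | hy
          · exact List.mem_cons_self
          · exact List.mem_cons_of_mem _ ((hmem y).mpr ⟨hy, hyx⟩)

lemma exists_chain {a b : V} (w : G.Walk a b) (hw : w.IsTrail) :
    ∃ (L : List V) (c : TChain G a L), (a :: L).Nodup ∧ c.edges.Nodup ∧
      (∀ e ∈ c.edges, e ∈ w.edges) ∧ (∀ x, x ∈ a :: L ↔ x ∈ w.support) := by
  induction w with
  | nil => exact ⟨[], .nil _, by simp, by simp [edges_nil], by simp [edges_nil], by simp⟩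
  | @cons a b d hab w ih =>
    rw [SimpleGraph.Walk.isTrail_cons] at hw
    obtain ⟨L, c, hnd, hen, hsub, hcov⟩ := ih hw.1
    have hedge : (SimpleGraph.Walk.cons hab SimpleGraph.Walk.nil :
        G.Walk a b).edges = [s(a, b)] := by simp
    by_cases ha : a ∈ w.support
    · have haL : a ∈ L := by
        have := (hcov a).mpr ha
        rcases List.mem_cons.mp this with rfl | h
        · exact absurd rfl hab.ne
        · exact h
      obtain ⟨L', c', hsl, hnd', hmem⟩ :=
        chain_erase c haL (List.nodup_cons.mp hnd).2
      refine ⟨b :: L', .cons (SimpleGraph.Walk.cons hab SimpleGraph.Walk.nil) c', ?_, ?_, ?_, ?_⟩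
      · refine List.nodup_cons.mpr ⟨?_, List.nodup_cons.mpr ⟨?_, hnd'⟩⟩
        · intro h
          rcases List.mem_cons.mp h with rfl | h
          · exact hab.ne rfl
          · exact ((hmem a).mp h).2 rfl
        · intro h
          exact (List.nodup_cons.mp hnd).1 ((hmem b).mp h).1
      · rw [edges_cons, hedge]
        refine List.nodup_cons.mpr ⟨fun h => hw.2 (hsub _ (hsl.mem h)), ?_⟩
        · exact hen.sublist hsl
      · intro e he
        rw [edges_cons, hedge] at he
        rw [SimpleGraph.Walk.edges_cons]
        rcases List.mem_cons.mp he with rfl | he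
        · exact List.mem_cons_self
        · exact List.mem_cons_of_mem _ (hsub _ (hsl.mem he))
      · intro x
        rw [SimpleGraph.Walk.support_cons]
        constructor
        · intro hx
          rcases List.mem_cons.mp hx with rfl | hx
          · exact List.mem_cons_self
          · refine List.mem_cons_of_mem _ ((hcov x).mp ?_)
            rcases List.mem_cons.mp hx with rfl | hx
            · exact List.mem_cons_self
            · exact List.mem_cons_of_mem _ ((hmem x).mp hx).1
        · intro hx
          rcases List.mem_cons.mp hx with rfl | hx
          · exact List.mem_cons_self
          · have := (hcov x).mpr hx
            rcases List.mem_cons.mp this with rfl | h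
            · exact List.mem_cons_of_mem _ (List.mem_cons_self)
            · by_cases hxa : x = a
              · exact hxa ▸ List.mem_cons_self
              · exact List.mem_cons_of_mem _
                  (List.mem_cons_of_mem _ ((hmem x).mpr ⟨h, hxa⟩))
    · refine ⟨b :: L, .cons (SimpleGraph.Walk.cons hab SimpleGraph.Walk.nil) c, ?_, ?_, ?_, ?_⟩
      · exact List.nodup_cons.mpr ⟨fun h => ha ((hcov a).mp h), hnd⟩
      · rw [edges_cons, hedge]
        exact List.nodup_cons.mpr ⟨fun h => hw.2 (hsub _ h), hen⟩
      · intro e he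
        rw [edges_cons, hedge] at he
        rw [SimpleGraph.Walk.edges_cons]
        rcases List.mem_cons.mp he with rfl | he
        · exact List.mem_cons_self
        · exact List.mem_cons_of_mem _ (hsub _ he)
      · intro x
        rw [SimpleGraph.Walk.support_cons]
        constructor
        · intro hx
          rcases List.mem_cons.mp hx with rfl | hx
          · exact List.mem_cons_self
          · exact List.mem_cons_of_mem _ ((hcov x).mp hx)
        · intro hx
          rcases List.mem_cons.mp hx with rfl | hx
          · exact List.mem_cons_self
          · exact List.mem_cons_of_mem _ ((hcov x).mpr hx)

end TChain

end PathEmbeddingAux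

/-- Let `G` be a finite simple graph on vertex set `V` with `n = |V| ≥ 1`.  The following
are equivalent:
(a) there exist a bijection `v : Fin n → V` and, for each index `i < n - 1`, a trail `P i`
in `G` from `v i` to `v (i+1)`, such that the edge sets of the `P i` are pairwise disjoint;
(b) `G` contains a trail whose support contains every vertex of `V`. -/
theorem path_embedding_iff_spanning_trail
    {V : Type*} [Fintype V] (G : SimpleGraph V)
    (n : ℕ) (hn : n = Fintype.card V) (hn1 : 1 ≤ n) :
    (∃ v : Fin n → V, Function.Bijective v ∧
      ∃ P : (i : Fin (n - 1)) →
          G.Walk (v ⟨i.val, by have := i.isLt; omega⟩) (v ⟨i.val + 1, by have := i.isLt; omega⟩),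
        (∀ i, (P i).IsTrail) ∧
        (∀ i j, i ≠ j → ∀ e, e ∈ (P i).edges → e ∉ (P j).edges)) ↔
    (∃ (a b : V) (w : G.Walk a b), w.IsTrail ∧ ∀ x : V, x ∈ w.support) := by
  classical
  constructor
  · rintro ⟨v, hv, P, hPt, hPd⟩
    have key : ∀ k : ℕ, (hk : k < n) →
        ∃ w : G.Walk (v ⟨0, by omega⟩) (v ⟨k, hk⟩),
          w.IsTrail ∧ (∀ i : ℕ, (hi : i ≤ k) → v ⟨i, by omega⟩ ∈ w.support) ∧
          (∀ e ∈ w.edges, ∃ j : Fin (n - 1), j.val < k ∧ e ∈ (P j).edges) := by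
      intro k
      induction k with
      | zero =>
        intro hk
        refine ⟨SimpleGraph.Walk.nil, SimpleGraph.Walk.IsTrail.nil, ?_, by simp⟩
        intro i hi
        interval_cases i
        simp
      | succ k ih =>
        intro hk
        obtain ⟨w, hwt, hws, hwe⟩ := ih (by omega)
        have hk' : k < n - 1 := by omega
        have Pk : G.Walk (v ⟨k, by omega⟩) (v ⟨k + 1, hk⟩) := P ⟨k, hk'⟩
        refine ⟨w.append (P ⟨k, hk'⟩), ?_, ?_, ?_⟩
        · rw [SimpleGraph.Walk.isTrail_def, SimpleGraph.Walk.edges_append,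
            List.nodup_append]
          refine ⟨hwt.edges_nodup, (hPt _).edges_nodup, ?_⟩
          intro e he e' he' hee
          subst hee
          obtain ⟨j, hjk, hje⟩ := hwe e he
          have hjne : j ≠ ⟨k, hk'⟩ := by
            intro h; rw [h] at hjk; simp at hjk
          exact hPd j ⟨k, hk'⟩ hjne e hje he'
        · intro i hi
          rw [SimpleGraph.Walk.mem_support_append_iff]
          rcases Nat.lt_or_ge i (k + 1) with h | h
          · exact Or.inl (hws i (by omega))
          · have : i = k + 1 := by omega
            subst this
            exact Or.inr (SimpleGraph.Walk.end_mem_support _)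
        · intro e he
          rw [SimpleGraph.Walk.edges_append, List.mem_append] at he
          rcases he with he | he
          · obtain ⟨j, hjk, hje⟩ := hwe e he
            exact ⟨j, by omega, hje⟩
          · exact ⟨⟨k, hk'⟩, Nat.lt_succ_self k, he⟩
    obtain ⟨w, hwt, hws, -⟩ := key (n - 1) (by omega)
    refine ⟨_, _, w, hwt, ?_⟩
    intro x
    obtain ⟨i, rfl⟩ := hv.2 x
    have h1 : i.val ≤ n - 1 := by have := i.isLt; omega
    exact hws i.val h1
  · rintro ⟨a, b, w, hwt, hcov⟩
    obtain ⟨L, c, hnd, hen, hsub, hcovL⟩ := PathEmbeddingAux.TChain.exists_chain w hwt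
    have hMcov : ∀ x : V, x ∈ a :: L := fun x => (hcovL x).mpr (hcov x)
    have hlen : (a :: L).length = n := by
      rw [hn, ← List.toFinset_card_of_nodup hnd]
      congr 1
      apply Finset.eq_univ_iff_forall.mpr
      intro x
      simpa using hMcov x
    have hL : L.length = n - 1 := by
      simp only [List.length_cons] at hlen; omega
    refine ⟨fun i => (a :: L).get ⟨i.val, by omega⟩, ⟨?_, ?_⟩, ?_⟩
    · intro i j hij
      have := List.nodup_iff_injective_get.mp hnd hij
      simpa [Fin.ext_iff] using this
    · intro x
      obtain ⟨⟨m, hm⟩, hmx⟩ := List.mem_iff_get.mp (hMcov x)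
      exact ⟨⟨m, by omega⟩, hmx⟩
    · refine ⟨fun i => c.nthWalk i.val (by have := i.isLt; omega), ?_, ?_⟩
      · have hjoin := hen
        rw [PathEmbeddingAux.TChain.edges, List.nodup_flatten] at hjoin
        intro i
        rw [SimpleGraph.Walk.isTrail_def, PathEmbeddingAux.TChain.nthWalk_edges]
        exact hjoin.1 _ (List.get_mem _ _)
      · have hjoin := hen
        rw [PathEmbeddingAux.TChain.edges, List.nodup_flatten] at hjoin
        intro i j hij e hei hej
        rw [PathEmbeddingAux.TChain.nthWalk_edges] at hei hej
        have hplen := PathEmbeddingAux.TChain.length_edgeLists c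
        have hpw := List.pairwise_iff_get.mp hjoin.2
        rcases Nat.lt_or_ge i.val j.val with h | h
        · exact hpw ⟨i.val, by omega⟩ ⟨j.val, by omega⟩ h hei hej
        · have h' : j.val < i.val := by
            rcases Nat.lt_or_ge j.val i.val with h' | h'
            · exact h'
            · exact absurd (Fin.ext (by omega)) hij
          exact (hpw ⟨j.val, by omega⟩ ⟨i.val, by omega⟩ h').symm hei hej
end

section
/- Let G be a finite simple graph on a vertex set V with |V| ≥ 2. For distinct u, v ∈ V, let G_{uv} denote the simple graph on V ∪ {⋆}, where ⋆ is a new vertex (e.g., vertices of type Option V), whose edges are the edges of G together with the two edges {⋆, u} and {⋆, v}. Then G contains a trail whose support contains every vertex of G if and only if there exist distinct vertices u, v ∈ V such that G_{uv} contains a closed trail whose support contains every vertex of G_{uv}. -/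
/-- Given a simple graph `G` on `V` and `u v : V`, the graph `G_{uv}` on `Option V`
obtained from `G` by adding a new vertex `⋆ = none` joined exactly to `u` and `v`. -/
def SimpleGraph.addApex {V : Type*} (G : SimpleGraph V) (u v : V) :
    SimpleGraph (Option V) where
  Adj x y :=
    (∃ a b, G.Adj a b ∧ x = some a ∧ y = some b) ∨
    (x = none ∧ (y = some u ∨ y = some v)) ∨
    (y = none ∧ (x = some u ∨ x = some v))
  symm := by
    constructor
    rintro x y (⟨a, b, hab, rfl, rfl⟩ | ⟨rfl, h⟩ | ⟨rfl, h⟩)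
    · exact Or.inl ⟨b, a, hab.symm, rfl, rfl⟩
    · exact Or.inr (Or.inr ⟨rfl, h⟩)
    · exact Or.inr (Or.inl ⟨rfl, h⟩)
  loopless := by
    constructor
    rintro x (⟨a, b, hab, rfl, hx⟩ | ⟨rfl, h | h⟩ | ⟨rfl, h | h⟩) <;> simp_all

namespace SpanningTrailAux

open SimpleGraph Walk

variable {V : Type*} {G : SimpleGraph V} {u v : V}

/-- The embedding of `G` into `G.addApex u v`. -/
def homSome (G : SimpleGraph V) (u v : V) : G →g G.addApex u v where
  toFun := some
  map_rel' := fun h => Or.inl ⟨_, _, h, rfl, rfl⟩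

@[simp] lemma homSome_apply (x : V) : homSome G u v x = some x := rfl

lemma adj_none_left : (G.addApex u v).Adj none (some u) :=
  Or.inr (Or.inl ⟨rfl, Or.inl rfl⟩)

lemma adj_none_right : (G.addApex u v).Adj none (some v) :=
  Or.inr (Or.inl ⟨rfl, Or.inr rfl⟩)

lemma ne_none_of_adj_none {z : Option V} (h : (G.addApex u v).Adj none z) :
    z = some u ∨ z = some v := by
  rcases h with ⟨a, b, hab, h1, h2⟩ | ⟨_, h⟩ | ⟨h, _⟩ <;> simp_all

/-- Any edge of `addApex` incident to `none` is `s(none, u)` or `s(none, v)`. -/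
lemma edge_of_none_mem {e : Sym2 (Option V)} (he : e ∈ (G.addApex u v).edgeSet)
    (hn : (none : Option V) ∈ e) : e = s(none, some u) ∨ e = s(none, some v) := by
  induction e using Sym2.inductionOn with
  | hf x y =>
    rcases Sym2.mem_iff.mp hn with rfl | rfl
    · rcases ne_none_of_adj_none he with rfl | rfl
      · exact Or.inl rfl
      · exact Or.inr rfl
    · rcases ne_none_of_adj_none ((G.addApex u v).adj_symm he) with rfl | rfl
      · exact Or.inl (Sym2.eq_swap)
      · exact Or.inr (Sym2.eq_swap)

/-- If a vertex is in the support of a walk, it is the start or is in some edge. -/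
lemma mem_support_cases {x y z : Option V} (w : (G.addApex u v).Walk x y)
    (hz : z ∈ w.support) : z = x ∨ ∃ e ∈ w.edges, z ∈ e := by
  induction w with
  | nil => simp_all
  | @cons a b c h p ih =>
    rw [support_cons, List.mem_cons] at hz
    rcases hz with rfl | hz
    · exact Or.inl rfl
    · rcases ih hz with rfl | ⟨e, he, hze⟩
      · exact Or.inr ⟨s(a, z), by simp, Sym2.mem_mk_right _ _⟩
      · exact Or.inr ⟨e, by simp [he], hze⟩

/-- Pull back a walk in `addApex` avoiding `none` to a walk in `G`. -/
lemma pull : ∀ {x y : Option V} (w : (G.addApex u v).Walk x y),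
    (∀ z ∈ w.support, z ≠ none) →
    ∃ (a b : V) (_ : x = some a) (_ : y = some b) (w' : G.Walk a b),
      w'.edges.map (Sym2.map some) = w.edges ∧ w'.support.map some = w.support := by
  intro x y w
  induction w with
  | @nil x =>
    intro h
    obtain ⟨a, rfl⟩ : ∃ a, x = some a := Option.ne_none_iff_exists'.mp (h x (by simp))
    exact ⟨a, a, rfl, rfl, Walk.nil, by simp, by simp⟩
  | @cons x z y hadj p ih =>
    intro h
    have hx : x ≠ none := h x (by simp)
    have hz : z ≠ none := h z (by simp)
    obtain ⟨c, d, hcd, rfl, rfl⟩ :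
        ∃ a b, G.Adj a b ∧ x = some a ∧ z = some b := by
      rcases hadj with h' | ⟨h', _⟩ | ⟨_, h' | h'⟩ <;> simp_all
    obtain ⟨c', b, hc', rfl, w', hw1, hw2⟩ := ih (fun t ht => h t (by simp [ht]))
    obtain rfl : d = c' := Option.some_injective _ hc'
    exact ⟨c, b, rfl, rfl, Walk.cons hcd w', by simp [hw1], by simp [hw2]⟩

lemma adj_homSome_none_right : (G.addApex u v).Adj (homSome G u v v) none :=
  (G.addApex u v).adj_symm adj_none_right

lemma adj_none_homSome_left : (G.addApex u v).Adj none (homSome G u v u) :=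
  adj_none_left

/-- Forward direction: a spanning trail between distinct vertices gives a spanning
closed trail in the apex graph. -/
lemma apexify (u v : V) (huv : u ≠ v) (t : G.Walk u v) (ht : t.IsTrail)
    (hs : ∀ x : V, x ∈ t.support) :
    ∃ (a : Option V) (w : (G.addApex u v).Walk a a),
      w.IsTrail ∧ ∀ x : Option V, x ∈ w.support := by
  refine ⟨none, Walk.cons adj_none_homSome_left ((t.map (homSome G u v)).concat
    (adj_homSome_none_right)), ?_, ?_⟩
  · rw [Walk.isTrail_def]
    simp only [edges_cons, edges_concat, List.concat_eq_append, List.nodup_cons,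
      List.mem_append]
    refine ⟨?_, ?_⟩
    · rintro (hmem | hmem)
      · rw [edges_map] at hmem
        obtain ⟨e, -, he⟩ := List.mem_map.mp hmem
        induction e using Sym2.inductionOn with
        | hf a b =>
          simp only [Sym2.map_pair_eq, homSome_apply] at he
          rw [Sym2.eq_iff] at he
          simp at he
      · simp only [homSome_apply, List.mem_singleton, Sym2.eq_iff] at hmem
        rcases hmem with ⟨h1, h2⟩ | ⟨h1, h2⟩ <;> simp_all
    · rw [List.nodup_append]
      refine ⟨?_, List.nodup_singleton _, ?_⟩
      · rw [edges_map]
        exact (ht.edges_nodup).map (Sym2.map.injective (Option.some_injective V))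
      · intro e he
        rw [edges_map] at he
        obtain ⟨e', -, rfl⟩ := List.mem_map.mp he
        simp only [List.mem_singleton]
        induction e' using Sym2.inductionOn with
        | hf a b =>
          simp only [Sym2.map_pair_eq, homSome_apply]
          rintro _ rfl
          rw [Ne, Sym2.eq_iff]
          simp
  · intro x
    rw [support_cons, List.mem_cons, support_concat,
      List.mem_append]
    cases x with
    | none => exact Or.inl rfl
    | some a =>
      refine Or.inr (Or.inl ?_)
      rw [Walk.support_map]
      exact List.mem_map.mpr ⟨a, hs a, rfl⟩

end SpanningTrailAux

/-- Let `G` be a finite simple graph on a vertex set `V` with `|V| ≥ 2`.  Then `G` contains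
a trail whose support contains every vertex of `G` if and only if there exist distinct
vertices `u ≠ v` such that `G_{uv}` (obtained by adding a new vertex adjacent exactly to
`u` and `v`) contains a closed trail whose support contains every vertex of `G_{uv}`. -/
theorem spanning_trail_iff_exists_apex_spanning_closed_trail
    {V : Type*} [Fintype V] (G : SimpleGraph V) (hV : 2 ≤ Fintype.card V) :
    (∃ (a b : V) (w : G.Walk a b), w.IsTrail ∧ ∀ x : V, x ∈ w.support) ↔
    (∃ u v : V, u ≠ v ∧
      ∃ (a : Option V) (w : (G.addApex u v).Walk a a),
        w.IsTrail ∧ ∀ x : Option V, x ∈ w.support) := by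
  open SimpleGraph Walk SpanningTrailAux in
  constructor
  · rintro ⟨a, b, w, ht, hs⟩
    by_cases hab : a = b
    · subst hab
      have hnil : ¬ w.Nil := by
        intro h
        rw [Walk.nil_iff_eq_nil] at h
        obtain ⟨c, hc⟩ := Fintype.exists_ne_of_one_lt_card (by omega) a
        have := hs c
        rw [h] at this
        simp at this
        exact hc this
      rw [Walk.not_nil_iff] at hnil
      obtain ⟨x, hax, p, rfl⟩ := hnil
      have hxa : x ≠ a := (G.ne_of_adj hax).symm
      refine ⟨x, a, hxa, apexify x a hxa p (ht.of_cons) ?_⟩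
      intro z
      have := hs z
      rw [Walk.support_cons, List.mem_cons] at this
      rcases this with rfl | h
      · exact p.end_mem_support
      · exact h
    · exact ⟨a, b, hab, apexify a b hab w ht hs⟩
  · rintro ⟨u, v, huv, a, w, ht, hs⟩
    classical
    set w0 := w.rotate none (hs none) with hw0def
    have ht0 : w0.IsTrail := ht.rotate _
    have hnil : ¬ w.Nil := by
      intro h
      rw [Walk.nil_iff_eq_nil] at h
      have h1 := hs none
      have h2 := hs (some u)
      rw [h] at h1 h2
      simp at h1 h2
      rw [← h1] at h2
      exact Option.some_ne_none _ h2
    have ha : a ∈ w.support.tail := by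
      rw [Walk.not_nil_iff] at hnil
      obtain ⟨x, hx, p, rfl⟩ := hnil
      simp only [Walk.support_cons, List.tail_cons]
      exact p.end_mem_support
    have htail : ∀ z, z ∈ w.support.tail := by
      intro z
      have := hs z
      rw [w.support_eq_cons, List.mem_cons] at this
      rcases this with rfl | h
      · exact ha
      · exact h
    have hs0 : ∀ z, z ∈ w0.support := by
      intro z
      rw [w0.support_eq_cons, List.mem_cons]
      exact Or.inr ((Walk.support_rotate w none (hs none)).mem_iff.mpr (htail z))
    clear_value w0
    clear hw0def ht hs htail ha hnil
    -- decompose w0 at both ends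
    have hnil0 : ¬ w0.Nil := by
      intro h
      rw [Walk.nil_iff_eq_nil] at h
      have := hs0 (some u)
      rw [h] at this
      simp at this
    rw [Walk.not_nil_iff] at hnil0
    obtain ⟨z1, hz1, p, rfl⟩ := hnil0
    obtain ⟨y, q, hy, heq⟩ := Walk.exists_cons_eq_concat hz1 p
    have hqnil : ¬ q.Nil :=
      Walk.not_nil_of_ne (fun h => ((G.addApex u v).ne_of_adj hy) h.symm)
    rw [Walk.not_nil_iff] at hqnil
    obtain ⟨z, hz, m, rfl⟩ := hqnil
    rw [heq] at ht0 hs0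
    rw [Walk.concat_cons] at ht0 hs0
    -- now the closed trail is cons hz ((m.concat hy) : Walk z none)
    have hedges : ((Walk.cons hz (m.concat hy)).edges : List (Sym2 (Option V)))
        = s(none, z) :: (m.edges ++ [s(y, none)]) := by
      simp [Walk.edges_concat, List.concat_eq_append]
    have hnodup := ht0.edges_nodup
    rw [hedges, List.nodup_cons, List.nodup_append] at hnodup
    obtain ⟨hhead, hmnodup, -, hdisj⟩ := hnodup
    have hyne : s(y, none) ∉ m.edges := by
      intro h
      exact hdisj _ h _ (List.mem_singleton_self _) rfl
    have hzy : z ≠ y := by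
      rintro rfl
      exact hhead (List.mem_append_right _ (by rw [Sym2.eq_swap]; simp))
    have hzuv : z = some u ∨ z = some v := ne_none_of_adj_none hz
    have hyuv : y = some u ∨ y = some v :=
      ne_none_of_adj_none ((G.addApex u v).adj_symm hy)
    have hnone_m : (none : Option V) ∉ m.support := by
      intro hmem
      rcases mem_support_cases m hmem with h | ⟨e, he, hne⟩
      · exact ((G.addApex u v).ne_of_adj hz) h
      · have := edge_of_none_mem (m.edges_subset_edgeSet he) hne
        rcases hzuv with rfl | rfl <;> rcases hyuv with rfl | rfl
        · exact hzy rfl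
        · rcases this with rfl | rfl
          · exact hhead (List.mem_append_left _ he)
          · exact hyne (by rwa [Sym2.eq_swap])
        · rcases this with rfl | rfl
          · exact hyne (by rwa [Sym2.eq_swap])
          · exact hhead (List.mem_append_left _ he)
        · exact hzy rfl
    obtain ⟨c, d, hzc, hyd, w', hw1, hw2⟩ :=
      pull m (fun t htm h => hnone_m (h ▸ htm))
    refine ⟨c, d, w', ?_, ?_⟩
    · rw [Walk.isTrail_def]
      have : (w'.edges.map (Sym2.map some)).Nodup := hw1 ▸ hmnodup
      exact this.of_map _
    · intro x
      have := hs0 (some x)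
      rw [Walk.support_cons, Walk.support_concat,
        List.mem_cons, List.mem_append] at this
      have hxm : some x ∈ m.support := by
        rcases this with h | h | h
        · exact absurd h (by simp)
        · exact h
        · simp at h
      rw [← hw2, List.mem_map] at hxm
      obtain ⟨x', hx', hxx⟩ := hxm
      rwa [Option.some_injective _ hxx] at hx'
end

section
/- Let G be a finite simple graph on a vertex set V and let v ∈ V. Let G* denote the simple graph on V ∪ {u₁, u₂}, where u₁ and u₂ are two new vertices (e.g., vertices of type V ⊕ Fin 2), whose edges are the edges of G together with the two edges {u₁, v} and {u₂, v}. Then G contains a closed trail whose support contains every vertex of G if and only if G* contains a trail whose support contains every vertex of G*. -/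
/-- Given a simple graph `G` on `V` and `v : V`, the graph `G*` on `V ⊕ Fin 2` obtained
from `G` by adding two new pendant vertices `u₁ = inr 0` and `u₂ = inr 1`, each joined
exactly to `v`. -/
def SimpleGraph.addTwoPendants {V : Type*} (G : SimpleGraph V) (v : V) :
    SimpleGraph (V ⊕ Fin 2) where
  Adj x y :=
    (∃ a b, G.Adj a b ∧ x = Sum.inl a ∧ y = Sum.inl b) ∨
    (∃ i : Fin 2, x = Sum.inr i ∧ y = Sum.inl v) ∨
    (∃ i : Fin 2, y = Sum.inr i ∧ x = Sum.inl v)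
  symm := by
    constructor
    rintro x y (⟨a, b, hab, rfl, rfl⟩ | ⟨i, rfl, rfl⟩ | ⟨i, rfl, rfl⟩)
    · exact Or.inl ⟨b, a, hab.symm, rfl, rfl⟩
    · exact Or.inr (Or.inr ⟨i, rfl, rfl⟩)
    · exact Or.inr (Or.inl ⟨i, rfl, rfl⟩)
  loopless := by
    constructor
    rintro x (⟨a, b, hab, rfl, hx⟩ | ⟨i, rfl, hx⟩ | ⟨i, hx, rfl⟩) <;> simp_all

namespace SpanningPendantAux

open SimpleGraph Walk

variable {V : Type*} {G : SimpleGraph V} {v : V}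

/-- The embedding of `G` into `G.addTwoPendants v`. -/
def inlHom (G : SimpleGraph V) (v : V) : G →g G.addTwoPendants v where
  toFun := Sum.inl
  map_rel' := fun h => Or.inl ⟨_, _, h, rfl, rfl⟩

@[simp] lemma inlHom_apply (G : SimpleGraph V) (v : V) (x : V) :
    inlHom G v x = Sum.inl x := rfl

lemma edge_char {i : Fin 2} {e : Sym2 (V ⊕ Fin 2)}
    (he : e ∈ (G.addTwoPendants v).edgeSet) (hm : (Sum.inr i : V ⊕ Fin 2) ∈ e) :
    e = s(Sum.inr i, Sum.inl v) := by
  induction e using Sym2.inductionOn with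
  | hf x y =>
    rcases he with ⟨a, b, hab, rfl, rfl⟩ | ⟨j, rfl, rfl⟩ | ⟨j, rfl, rfl⟩
    · simp [Sym2.mem_iff] at hm
    · rw [Sym2.mem_iff] at hm
      rcases hm with h | h
      · obtain rfl : j = i := by simpa using h.symm
        rfl
      · simp at h
    · rw [Sym2.mem_iff] at hm
      rcases hm with h | h
      · simp at h
      · obtain rfl : j = i := by simpa using h.symm
        rw [Sym2.eq_swap]

/-- A vertex in the support of a walk is its start or lies on some edge. -/
lemma mem_support_cases {W : Type*} {H : SimpleGraph W} {u t x : W} (w : H.Walk u t)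
    (hx : x ∈ w.support) : x = u ∨ ∃ e ∈ w.edges, x ∈ e := by
  induction w with
  | nil => simpa using hx
  | @cons a c d h p ih =>
    rw [Walk.support_cons, List.mem_cons] at hx
    rcases hx with rfl | hx
    · exact Or.inl rfl
    · rcases ih hx with rfl | ⟨e, he, hxe⟩
      · exact Or.inr ⟨s(a, x), by simp, by simp⟩
      · exact Or.inr ⟨e, by simp [he], hxe⟩

/-- Pull back a walk in `G.addTwoPendants v` that avoids the pendant vertices. -/
lemma pull : ∀ {s t : V ⊕ Fin 2} (w : (G.addTwoPendants v).Walk s t) (x y : V)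
    (h1 : s = Sum.inl x) (h2 : t = Sum.inl y),
    (∀ z : Fin 2, (Sum.inr z : V ⊕ Fin 2) ∉ w.support) →
    ∃ p : G.Walk x y, w.copy h1 h2 = p.map (inlHom G v) := by
  intro s t w
  induction w with
  | nil =>
    rintro x y rfl h hs
    obtain rfl : y = x := by simpa using h.symm
    exact ⟨Walk.nil, rfl⟩
  | @cons a c d h p ih =>
    rintro x y rfl rfl hs
    obtain ⟨c', rfl⟩ : ∃ c', c = Sum.inl c' := by
      rcases c with c' | z
      · exact ⟨c', rfl⟩
      · exact absurd (by simp) (hs z)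
    have hG : G.Adj x c' := by
      rcases h with ⟨a', b', hab, ha, hb⟩ | ⟨j, hj, _⟩ | ⟨j, hj, _⟩
      · obtain rfl : x = a' := by simpa using ha
        obtain rfl : c' = b' := by simpa using hb
        exact hab
      · simp at hj
      · simp at hj
    obtain ⟨p', hp'⟩ := ih c' y rfl rfl (fun z hz => hs z (by simp [hz]))
    refine ⟨Walk.cons hG p', ?_⟩
    simp only [Walk.copy_rfl_rfl] at hp' ⊢
    rw [Walk.map_cons, ← hp']
    rfl

lemma pull' {x y : V} (w : (G.addTwoPendants v).Walk (Sum.inl x) (Sum.inl y))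
    (hs : ∀ z : Fin 2, (Sum.inr z : V ⊕ Fin 2) ∉ w.support) :
    ∃ p : G.Walk x y, w = p.map (inlHom G v) := by
  obtain ⟨p, hp⟩ := pull w x y rfl rfl hs
  exact ⟨p, by simpa using hp⟩

lemma backward_core {i j : Fin 2} (hij : i ≠ j)
    (w : (G.addTwoPendants v).Walk (Sum.inr i) (Sum.inr j))
    (hw : w.IsTrail) (hsp : ∀ x : V ⊕ Fin 2, x ∈ w.support) :
    ∃ (a : V) (p : G.Walk a a), p.IsTrail ∧ ∀ x : V, x ∈ p.support := by
  classical
  cases w with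
  | nil => exact absurd rfl hij
  | @cons _ c _ h q =>
  obtain rfl : c = Sum.inl v := by
    rcases h with ⟨a', b', hab, ha, hb⟩ | ⟨k, hk, hc⟩ | ⟨k, hk, hc⟩
    · simp at ha
    · exact hc
    · simp at hc
  have hq := (Walk.isTrail_cons h q).1 hw
  cases hqr : q.reverse with
  | @cons _ c' _ h' r =>
  obtain rfl : c' = Sum.inl v := by
    rcases h' with ⟨a', b', hab, ha, hb⟩ | ⟨k, hk, hc⟩ | ⟨k, hk, hc⟩
    · simp at ha
    · exact hc
    · simp at hc
  have hqrt : q.reverse.IsTrail := Walk.IsTrail.reverse _ hq.1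
  rw [hqr] at hqrt
  have hr := (Walk.isTrail_cons h' r).1 hqrt
  -- the middle walk
  set m : (G.addTwoPendants v).Walk (Sum.inl v) (Sum.inl v) := r.reverse with hm
  have hmt : m.IsTrail := Walk.IsTrail.reverse _ hr.1
  have hnp : ∀ z : Fin 2, (Sum.inr z : V ⊕ Fin 2) ∉ m.support := by
    intro z hz
    have hzr : (Sum.inr z : V ⊕ Fin 2) ∈ r.support := by
      rwa [hm, Walk.support_reverse, List.mem_reverse] at hz
    rcases mem_support_cases r hzr with hEq | ⟨e, he, hze⟩
    · simp at hEq
    · have hee : e = s(Sum.inr z, Sum.inl v) :=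
        edge_char (r.edges_subset_edgeSet he) hze
      subst hee
      have hzij : z = i ∨ z = j := by
        fin_cases z <;> fin_cases i <;> fin_cases j <;> simp_all
      rcases hzij with rfl | rfl
      · -- the first pendant edge would be reused
        have : s(Sum.inr z, Sum.inl v) ∈ q.edges := by
          rw [← List.mem_reverse, ← Walk.edges_reverse, hqr, Walk.edges_cons]
          exact List.mem_cons_of_mem _ he
        exact hq.2 this
      · exact hr.2 he
  obtain ⟨p, hp⟩ := pull' m hnp
  refine ⟨v, p, ?_, ?_⟩
  · have := hmt
    rw [hp] at this
    exact (Walk.map_isTrail_iff_of_injective (f := inlHom G v) Sum.inl_injective).1 this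
  · intro x
    have hx : (Sum.inl x : V ⊕ Fin 2) ∈ (Walk.cons h q).support := hsp (Sum.inl x)
    rw [Walk.support_cons, List.mem_cons] at hx
    rcases hx with hx | hx
    · simp at hx
    · have hx' : (Sum.inl x : V ⊕ Fin 2) ∈ q.reverse.support := by
        rwa [Walk.support_reverse, List.mem_reverse]
      rw [hqr, Walk.support_cons, List.mem_cons] at hx'
      rcases hx' with hx' | hx'
      · simp at hx'
      · have hxm : (Sum.inl x : V ⊕ Fin 2) ∈ m.support := by
          rwa [hm, Walk.support_reverse, List.mem_reverse]
        erw [hp, Walk.support_map, List.mem_map] at hxm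
        obtain ⟨y, hy, hyx⟩ := hxm
        obtain rfl : y = x := Sum.inl_injective hyx
        exact hy

end SpanningPendantAux

open SpanningPendantAux SimpleGraph Walk in
/-- Let `G` be a finite simple graph on a vertex set `V` and let `v ∈ V`.  Then `G`
contains a closed trail whose support contains every vertex of `G` if and only if `G*`
(obtained by attaching two new pendant vertices to `v`) contains a trail whose support
contains every vertex of `G*`. -/
theorem spanning_closed_trail_iff_pendant_spanning_trail
    {V : Type*} [Fintype V] (G : SimpleGraph V) (v : V) :
    (∃ (a : V) (w : G.Walk a a), w.IsTrail ∧ ∀ x : V, x ∈ w.support) ↔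
    (∃ (a b : V ⊕ Fin 2) (w : (G.addTwoPendants v).Walk a b),
      w.IsTrail ∧ ∀ x : V ⊕ Fin 2, x ∈ w.support) := by
  classical
  constructor
  · rintro ⟨a, w, hw, hsp⟩
    have hv : v ∈ w.support := hsp v
    set c : G.Walk v v := w.rotate v hv with hc
    have hct : c.IsTrail := hw.rotate hv
    have hcs : ∀ x : V, x ∈ c.support := by
      intro x
      have hx : x ∈ w.support := hsp x
      rw [← Walk.take_spec w hv, Walk.mem_support_append_iff] at hx
      have hrw : c = (w.dropUntil v hv).append (w.takeUntil v hv) := rfl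
      rw [hrw, Walk.mem_support_append_iff]
      tauto
    set p : (G.addTwoPendants v).Walk (Sum.inl v) (Sum.inl v) := c.map (inlHom G v) with hp
    have h0 : (G.addTwoPendants v).Adj (Sum.inr 0) (Sum.inl v) :=
      Or.inr (Or.inl ⟨0, rfl, rfl⟩)
    have h1 : (G.addTwoPendants v).Adj (Sum.inl v) (Sum.inr 1) :=
      Or.inr (Or.inr ⟨1, rfl, rfl⟩)
    have hpt : p.IsTrail :=
      (Walk.map_isTrail_iff_of_injective Sum.inl_injective).2 hct
    have hedge : ∀ (e : Sym2 (V ⊕ Fin 2)) (i : Fin 2),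
        e ∈ p.edges → (Sum.inr i : V ⊕ Fin 2) ∉ e := by
      intro e i he hi
      erw [hp, Walk.edges_map, List.mem_map] at he
      obtain ⟨e', _, rfl⟩ := he
      revert hi
      induction e' using Sym2.inductionOn with
      | hf a b => simp [inlHom, Sym2.mem_iff]
    refine ⟨Sum.inr 0, Sum.inr 1, Walk.cons h0 (p.concat h1), ?_, ?_⟩
    · rw [Walk.isTrail_cons]
      constructor
      · rw [Walk.isTrail_def, Walk.edges_concat, List.concat_eq_append, List.nodup_append]
        refine ⟨hpt.edges_nodup, List.nodup_singleton _, ?_⟩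
        intro e he e' he' hee'
        simp only [List.mem_singleton] at he'
        subst he'
        subst hee'
        exact hedge _ 1 he (by simp)
      · rw [Walk.edges_concat, List.concat_eq_append, List.mem_append]
        rintro (h | h)
        · exact hedge _ 0 h (by simp)
        · simp only [List.mem_singleton, Sym2.eq, Sym2.rel_iff', Prod.mk.injEq,
            Prod.swap_prod_mk] at h
          rcases h with ⟨h, -⟩ | ⟨h, -⟩ <;> simp [inlHom_apply] at h
    · intro x
      rcases x with x | i
      · have hxp : (Sum.inl x : V ⊕ Fin 2) ∈ p.support := by
          erw [hp, Walk.support_map]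
          exact List.mem_map_of_mem (hcs x)
        rw [Walk.support_cons]
        refine List.mem_cons_of_mem _ ?_
        rw [Walk.support_concat, List.mem_append]
        exact Or.inl hxp
      · fin_cases i
        · exact Walk.start_mem_support _
        · exact Walk.end_mem_support _
  · rintro ⟨a, b, w, hw, hsp⟩
    have hend : ∀ i : Fin 2, (Sum.inr i : V ⊕ Fin 2) = a ∨ (Sum.inr i : V ⊕ Fin 2) = b := by
      intro i
      rcases mem_support_cases w (hsp (Sum.inr i)) with h | ⟨e, he, hie⟩
      · exact Or.inl h
      · have hee : e = s(Sum.inr i, Sum.inl v) :=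
          edge_char (w.edges_subset_edgeSet he) hie
        subst hee
        have hcount : (w.edges.countP fun e => decide ((Sum.inr i : V ⊕ Fin 2) ∈ e)) = 1 := by
          have h1 : (w.edges.countP fun e => decide ((Sum.inr i : V ⊕ Fin 2) ∈ e))
              = w.edges.count s(Sum.inr i, Sum.inl v) := by
            rw [List.count_eq_countP]
            apply List.countP_congr
            intro e' he'
            simp only [decide_eq_true_eq, beq_iff_eq]
            constructor
            · intro h; exact edge_char (w.edges_subset_edgeSet he') h
            · rintro rfl; simp
          rw [h1]
          have hle := List.nodup_iff_count_le_one.1 hw.edges_nodup s(Sum.inr i, Sum.inl v)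
          have hge := (List.count_pos_iff).2 he
          omega
        have hodd : ¬ Even (w.edges.countP fun e => decide ((Sum.inr i : V ⊕ Fin 2) ∈ e)) := by
          rw [hcount]; decide
        rw [hw.even_countP_edges_iff] at hodd
        push_neg at hodd
        obtain ⟨hab, h2⟩ := hodd
        by_cases hia : (Sum.inr i : V ⊕ Fin 2) = a
        · exact Or.inl hia
        · exact Or.inr (h2 hia)
    rcases hend 0 with h0 | h0 <;> rcases hend 1 with h1 | h1
    · rw [← h0] at h1; simp at h1
    · subst h0; subst h1
      exact backward_core (by decide) w hw hsp
    · subst h0; subst h1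
      exact backward_core (by decide) w hw hsp
    · rw [← h0] at h1; simp at h1
end

section
/- Fix L ≥ 1 and lengths l_1, …, l_k ≥ 1, and let P be the path graph on vertices {0, 1, …, L} in which i and i+1 are adjacent for all i < L. Say the k path requests are simultaneously embeddable on P if for each j ∈ {1, …, k} there exist an injective map f_j : {0, …, l_j} → {0, …, L} and, for each t < l_j, a trail Q_{j,t} in P from f_j(t) to f_j(t+1), such that (i) across all j and t the trails Q_{j,t} have pairwise disjoint edge sets, and (ii) every vertex i ∈ {0, …, L} satisfies |{(j,t) : f_j(t) = i}| ≤ 2. Then the k path requests are simultaneously embeddable on P if and only if l_1 + l_2 + ⋯ + l_k ≤ L. -/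
open SimpleGraph in
lemma pp_edge_char {n : ℕ} (e : Sym2 (Fin (n+1))) (he : e ∈ (pathGraph (n+1)).edgeSet) :
    ∃ u v : Fin (n+1), e = s(u, v) ∧ u.val + 1 = v.val := by
  induction e using Sym2.ind with
  | _ a b =>
    rw [SimpleGraph.mem_edgeSet, pathGraph_adj] at he
    rcases he with h | h
    · exact ⟨a, b, rfl, h⟩
    · exact ⟨b, a, Sym2.eq_swap, h⟩

/-- Uniform-setting path-on-path embedding criterion.  Let `P` be the path graph on the
`L + 1` vertices `{0, …, L}` and let `l j ≥ 1` for `j < k` be the lengths of `k` path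
requests.  The requests are simultaneously embeddable — i.e. there are injections
`f j : Fin (l j + 1) → Fin (L + 1)` and trails `Q j t` from `f j t` to `f j (t+1)` whose
edge sets are pairwise disjoint across all `(j, t)`, and every substrate vertex hosts at
most two virtual nodes — if and only if `l 0 + ⋯ + l (k-1) ≤ L`. -/
theorem paths_on_path_embeddable_iff_sum_le
    (L : ℕ) (hL : 1 ≤ L) (k : ℕ) (l : Fin k → ℕ) (hl : ∀ j, 1 ≤ l j) :
    (∃ f : (j : Fin k) → Fin (l j + 1) → Fin (L + 1),
      (∀ j, Function.Injective (f j)) ∧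
      ∃ Q : (j : Fin k) → (t : Fin (l j)) →
          (SimpleGraph.pathGraph (L + 1)).Walk (f j t.castSucc) (f j t.succ),
        (∀ j t, (Q j t).IsTrail) ∧
        (∀ (j : Fin k) (t : Fin (l j)) (j' : Fin k) (t' : Fin (l j')),
          (⟨j, t⟩ : (j : Fin k) × Fin (l j)) ≠ ⟨j', t'⟩ →
          ∀ e, e ∈ (Q j t).edges → e ∉ (Q j' t').edges) ∧
        (∀ i : Fin (L + 1),
          (Finset.univ.filter
            (fun p : (j : Fin k) × Fin (l j + 1) => f p.1 p.2 = i)).card ≤ 2)) ↔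
    (∑ j, l j) ≤ L := by
  open SimpleGraph in
  constructor
  · -- forward direction
    rintro ⟨f, hfinj, Q, htrail, hdisj, -⟩
    have hne : ∀ p : (j : Fin k) × Fin (l j), (Q p.1 p.2).edges ≠ [] := by
      intro p h
      have hlen : (Q p.1 p.2).length = 0 := by
        have := SimpleGraph.Walk.length_edges (Q p.1 p.2)
        rw [h] at this; simpa using this.symm
      have heq := SimpleGraph.Walk.eq_of_length_eq_zero hlen
      have := hfinj p.1 heq
      exact absurd this (Fin.castSucc_lt_succ).ne
    set E : ((j : Fin k) × Fin (l j)) → Sym2 (Fin (L+1)) :=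
      fun p => (Q p.1 p.2).edges.head (hne p) with hE
    have hEmem : ∀ p, E p ∈ (Q p.1 p.2).edges := fun p => List.head_mem _
    have hEedge : ∀ p, E p ∈ (pathGraph (L+1)).edgeSet :=
      fun p => SimpleGraph.Walk.edges_subset_edgeSet _ (hEmem p)
    have hEinj : Function.Injective E := by
      intro p q h
      by_contra hpq
      exact hdisj p.1 p.2 q.1 q.2 (by simpa using hpq) (E p) (hEmem p) (h ▸ hEmem q)
    have hcard : (Finset.univ : Finset ((j : Fin k) × Fin (l j))).card ≤ (Finset.range L).card := by
      apply Finset.card_le_card_of_injOn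
        (fun p => Sym2.lift ⟨fun a b => min a.val b.val, fun a b => Nat.min_comm _ _⟩ (E p))
      · intro p _
        obtain ⟨u, v, he, huv⟩ := pp_edge_char _ (hEedge p)
        simp only [Finset.coe_range, Set.mem_Iio]
        rw [he]
        simp only [Sym2.lift_mk]
        have := v.isLt; omega
      · intro p _ q _ h
        obtain ⟨u, v, he, huv⟩ := pp_edge_char _ (hEedge p)
        obtain ⟨u', v', he', huv'⟩ := pp_edge_char _ (hEedge q)
        simp only [he, he', Sym2.lift_mk] at h
        rw [Nat.min_eq_left (by omega), Nat.min_eq_left (by omega)] at h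
        have hu : u = u' := Fin.ext h
        have hv : v = v' := Fin.ext (by omega)
        apply hEinj
        rw [he, he', hu, hv]
    simpa [Fintype.card_sigma] using hcard
  · -- backward direction
    intro hsum
    set S : ℕ → ℕ := fun m => ∑ i ∈ Finset.range m, (if h : i < k then l ⟨i, h⟩ else 0) with hS
    have hSsucc : ∀ j : Fin k, S (j.val + 1) = S j.val + l j := by
      intro j
      simp [hS, Finset.sum_range_succ, j.isLt]
    have hSmono : Monotone S := by
      intro a b hab
      exact Finset.sum_le_sum_of_subset (Finset.range_subset_range.2 hab)
    have hSk : S k = ∑ j, l j := by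
      simp only [hS]
      rw [← Fin.sum_univ_eq_sum_range (fun i => if h : i < k then l ⟨i, h⟩ else 0) k]
      exact Finset.sum_congr rfl (fun j _ => by simp [j.isLt])
    have hbound : ∀ j : Fin k, S j.val + l j ≤ L := by
      intro j
      calc S j.val + l j = S (j.val + 1) := (hSsucc j).symm
        _ ≤ S k := hSmono (by omega)
        _ = ∑ j, l j := hSk
        _ ≤ L := hsum
    have hlt : ∀ (j : Fin k) (t : ℕ), t ≤ l j → S j.val + t < L + 1 := by
      intro j t ht; have := hbound j; omega
    have hA : ∀ (j j' : Fin k), j < j' → ∀ t : ℕ, t ≤ l j → S j.val + t ≤ S j'.val := by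
      intro j j' hjj t ht
      calc S j.val + t ≤ S j.val + l j := by omega
        _ = S (j.val + 1) := (hSsucc j).symm
        _ ≤ S j'.val := hSmono hjj
    have hinj2 : ∀ (j j' : Fin k) (t t' : ℕ), t < l j → t' < l j' →
        S j.val + t = S j'.val + t' → j = j' := by
      intro j j' t t' ht ht' h
      rcases lt_trichotomy j j' with h1 | h1 | h1
      · exfalso; have := hA j j' h1 (t + 1) (by omega); omega
      · exact h1
      · exfalso; have := hA j' j h1 (t' + 1) (by omega); omega
    refine ⟨fun j t => ⟨S j.val + t.val, hlt j t.val (by omega)⟩, ?_, ?_⟩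
    · intro j a b h
      have := congrArg Fin.val h
      simp only at this
      exact Fin.ext (by omega)
    refine ⟨fun j t => SimpleGraph.Walk.cons (pathGraph_adj.2 (Or.inl (by
        simp only [Fin.coe_castSucc, Fin.val_succ]; omega))) SimpleGraph.Walk.nil,
      fun j t => by simp [SimpleGraph.Walk.isTrail_def], ?_, ?_⟩
    · -- edge disjointness
      intro j t j' t' hne e he he'
      simp only [SimpleGraph.Walk.edges_cons, SimpleGraph.Walk.edges_nil,
        List.mem_singleton] at he he'
      subst he
      rw [Sym2.eq_iff] at he'
      have hval : S j.val + t.val = S j'.val + t'.val := by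
        rcases he' with ⟨h1, h2⟩ | ⟨h1, h2⟩ <;>
          [skip; skip] <;>
        · have e1 := congrArg Fin.val h1
          have e2 := congrArg Fin.val h2
          simp only [Fin.coe_castSucc, Fin.val_succ] at e1 e2
          omega
      have hjj : j = j' := hinj2 j j' t.val t'.val t.isLt t'.isLt hval
      subst hjj
      exact hne (by
        have : t = t' := Fin.ext (by omega)
        rw [this])
    · -- load
      intro i
      by_contra hcon
      push_neg at hcon
      rw [Finset.two_lt_card_iff] at hcon
      obtain ⟨a, b, c, ha, hb, hc, hab, hac, hbc⟩ := hcon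
      simp only [Finset.mem_filter, Finset.mem_univ, true_and] at ha hb hc
      have va := congrArg Fin.val ha
      have vb := congrArg Fin.val hb
      have vc := congrArg Fin.val hc
      simp only at va vb vc
      have hfst : ∀ p q : (j : Fin k) × Fin (l j + 1),
          S p.1.val + p.2.val = i.val → S q.1.val + q.2.val = i.val → p.1 = q.1 → p = q := by
        rintro ⟨j, t⟩ ⟨j', t'⟩ hp hq h1
        dsimp only at hp hq h1
        subst h1
        have : t = t' := Fin.ext (by omega)
        rw [this]
      have hab1 : a.1 ≠ b.1 := fun h => hab (hfst a b va vb h)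
      have hac1 : a.1 ≠ c.1 := fun h => hac (hfst a c va vc h)
      have hbc1 : b.1 ≠ c.1 := fun h => hbc (hfst b c vb vc h)
      have hB : ∀ p q : (j : Fin k) × Fin (l j + 1),
          S p.1.val + p.2.val = i.val → S q.1.val + q.2.val = i.val →
          p.1 < q.1 → S q.1.val = i.val := by
        intro p q hp hq h1
        have h2 := hA p.1 q.1 h1 p.2.val (by have := p.2.isLt; omega)
        omega
      have final : ∀ x y z : (j : Fin k) × Fin (l j + 1),
          S x.1.val + x.2.val = i.val → S y.1.val + y.2.val = i.val →
          S z.1.val + z.2.val = i.val → x.1 < y.1 → y.1 < z.1 → False := by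
        intro x y z hx hy hz h1 h2
        have e1 := hB x y hx hy h1
        have e2 := hB y z hy hz h2
        have e3 := hA y.1 z.1 h2 (l y.1) le_rfl
        have := hl y.1
        omega
      rcases hab1.lt_or_gt with h1 | h1 <;> rcases hac1.lt_or_gt with h2 | h2 <;>
        rcases hbc1.lt_or_gt with h3 | h3 <;>
        first
          | exact final a b c va vb vc h1 h3
          | exact final a c b va vc vb h2 h3
          | exact final c a b vc va vb h2 h1
          | exact final b a c vb va vc h1 h2
          | exact final b c a vb vc va h3 h2
          | exact final c b a vc vb va h3 h1
          | exact absurd (h2.trans (h1.trans h3)) (lt_irrefl _)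
          | exact absurd (h1.trans (h3.trans h2)) (lt_irrefl _)
end
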